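/- Let φ : H → H be a map on a subset H ⊂ ℂ satisfying φ(z) = z + 1 + E(z) where |E(z)| ≤ C/|z| for some constant C, and suppose |φ^{∘n}(z)| ≥ n/2 for all n ≥ 1. Fix z ∈ H and set r_n = φ^{∘n}(z). Then arg r_n → 0 as n → ∞. -/

import Mathlib

open Filter Topology

/-- For `φ(z) = z + 1 + E(z)` with `|E(z)| ≤ C/|z|` mapping `H` to
itself and `|φ^[n](z)| ≥ n/2`, the arguments of the orbit `r_n = φ^[n](z)` tend to 0. -/
theorem orbit_argument_tendsto_zero
    (H : Set ℂ) (φ : ℂ → ℂ) (C : ℝ)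
    (hmaps : Set.MapsTo φ H H)
    (hE : ∀ w ∈ H, ‖φ w - w - 1‖ ≤ C / ‖w‖)
    (hiter : ∀ w ∈ H, ∀ n : ℕ, 1 ≤ n → (n : ℝ) / 2 ≤ ‖(φ^[n]) w‖)
    (z : ℂ) (hz : z ∈ H) :
    Tendsto (fun n : ℕ => Complex.arg ((φ^[n]) z)) atTop (𝓝 0) := by
  set r : ℕ → ℂ := fun n => (φ^[n]) z with hr
  have hrH : ∀ n, r n ∈ H := fun n => Set.MapsTo.iterate hmaps n hz
  have hstep : ∀ n, r (n + 1) = φ (r n) := by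
    intro n; simp [hr, Function.iterate_succ_apply']
  set e : ℕ → ℂ := fun n => φ (r n) - r n - 1 with he
  -- positivity of C
  have hr1 : (1 : ℝ) / 2 ≤ ‖r 1‖ := by
    have := hiter z hz 1 le_rfl
    simpa [hr] using this
  have hr1pos : 0 < ‖r 1‖ := lt_of_lt_of_le (by norm_num) hr1
  have hC : 0 ≤ C := by
    by_contra h
    push_neg at h
    have hneg : C / ‖r 1‖ < 0 := div_neg_of_neg_of_pos h hr1pos
    have := (norm_nonneg _).trans (hE (r 1) (hrH 1))
    linarith
  -- the error terms tend to 0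
  have hrk : ∀ k : ℕ, 1 ≤ k → (k : ℝ) / 2 ≤ ‖r k‖ := by
    intro k hk; exact hiter z hz k hk
  have hebound : ∀ k : ℕ, 1 ≤ k → ‖e k‖ ≤ 2 * C / k := by
    intro k hk
    have hk2 : (0 : ℝ) < (k : ℝ) / 2 := by
      have : (1 : ℝ) ≤ (k : ℝ) := by exact_mod_cast hk
      linarith
    have h1 : ‖e k‖ ≤ C / ‖r k‖ := hE (r k) (hrH k)
    have h2 : C / ‖r k‖ ≤ C / ((k : ℝ) / 2) :=
      div_le_div_of_nonneg_left hC hk2 (hrk k hk)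
    have h3 : C / ((k : ℝ) / 2) = 2 * C / k := by
      field_simp
    linarith [h1, h2, h3.le]
  have he0 : Tendsto e atTop (𝓝 0) := by
    refine squeeze_zero_norm' (a := fun k : ℕ => 2 * C / k) ?_ ?_
    · filter_upwards [eventually_ge_atTop 1] with k hk using hebound k hk
    · exact tendsto_const_div_atTop_nhds_zero_nat (2 * C)
  -- the explicit sum formula
  have hsum : ∀ n, r n = z + n + ∑ k ∈ Finset.range n, e k := by
    intro n
    induction n with
    | zero => simp [hr]
    | succ n ih =>
      rw [Finset.sum_range_succ, hstep n]
      have : φ (r n) = r n + 1 + e n := by simp only [he]; ring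
      rw [this, ih]
      push_cast
      ring
  -- Cesàro: partial sums over n tend to 0
  have hces : Tendsto (fun n : ℕ => (n : ℝ)⁻¹ • ∑ k ∈ Finset.range n, e k)
      atTop (𝓝 0) := by
    simpa using he0.cesaro_smul
  -- z / n → 0
  have hzn : Tendsto (fun n : ℕ => z / (n : ℂ)) atTop (𝓝 0) := by
    refine squeeze_zero_norm (a := fun n : ℕ => ‖z‖ / n) ?_ ?_
    · intro n
      simp [norm_div]
    · exact tendsto_const_div_atTop_nhds_zero_nat ‖z‖
  -- r n / n → 1
  have hq : Tendsto (fun n : ℕ => r n / (n : ℂ)) atTop (𝓝 1) := by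
    have hlim : Tendsto (fun n : ℕ =>
        z / (n : ℂ) + 1 + (n : ℝ)⁻¹ • ∑ k ∈ Finset.range n, e k) atTop (𝓝 1) := by
      have := (hzn.add (tendsto_const_nhds (x := (1:ℂ)))).add hces
      simpa using this
    apply hlim.congr'
    filter_upwards [eventually_ge_atTop 1] with n hn
    have hn0 : (n : ℂ) ≠ 0 := Nat.cast_ne_zero.mpr (by omega)
    rw [hsum n]
    rw [Complex.real_smul]
    push_cast
    field_simp
  -- conclude via continuity of arg at 1
  have hcont : ContinuousAt Complex.arg 1 :=
    Complex.continuousAt_arg Complex.one_mem_slitPlane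
  have harg : Tendsto (fun n : ℕ => Complex.arg (r n / (n : ℂ))) atTop (𝓝 0) := by
    have := hcont.tendsto.comp hq
    simpa [Complex.arg_one, Function.comp_def] using this
  apply harg.congr'
  filter_upwards [eventually_ge_atTop 1] with n hn
  have hnpos : (0 : ℝ) < (n : ℝ)⁻¹ := by
    have : (0 : ℝ) < n := by exact_mod_cast Nat.lt_of_lt_of_le Nat.zero_lt_one hn
    positivity
  have : r n / (n : ℂ) = ((n : ℝ)⁻¹ : ℝ) * r n := by
    rw [Complex.ofReal_inv]
    push_cast
    ring
  rw [this, Complex.arg_real_mul _ hnpos]
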